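/- As formal power series over ℚ, the generating function E(t) = Σ_{n≥0} binom(2n, n) t^n satisfies E(t)·(1 − 2t·C(t)) = 1, where C(t) = Σ_{n≥0} C_n t^n is the Catalan generating function. -/

import Mathlib

open PowerSeries

lemma key_nat (n : ℕ) :
    (2 * (n + 1)).choose (n + 1) + 2 * catalan n = 4 * ((2 * n).choose n) := by
  apply Nat.eq_of_mul_eq_mul_left (show 0 < n + 1 by omega)
  have h1 := Nat.succ_mul_centralBinom_succ n
  have h2 := succ_mul_catalan_eq_centralBinom n
  show (n + 1) * ((n + 1).centralBinom + 2 * catalan n) = (n + 1) * (4 * n.centralBinom)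
  nlinarith [h1, h2]

lemma catalan_sq :
    PowerSeries.X * (PowerSeries.mk fun n => ((catalan n : ℕ) : ℚ)) ^ 2 =
      (PowerSeries.mk fun n => ((catalan n : ℕ) : ℚ)) - 1 := by
  ext n
  cases n with
  | zero => simp
  | succ n =>
    rw [PowerSeries.coeff_succ_X_mul]
    simp only [sq, PowerSeries.coeff_mul, PowerSeries.coeff_mk, map_sub,
      PowerSeries.coeff_one, Nat.succ_ne_zero, if_false, sub_zero]
    rw [catalan_succ' n]
    push_cast
    rfl

theorem centralBinom_mul_one_sub_two_t_catalan :
    (PowerSeries.mk fun n => (((2 * n).choose n : ℕ) : ℚ)) *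
      (1 - 2 * PowerSeries.X * (PowerSeries.mk fun n => ((catalan n : ℕ) : ℚ))) = 1 := by
  set Cs : PowerSeries ℚ := PowerSeries.mk fun n => ((catalan n : ℕ) : ℚ) with hCs
  set E : PowerSeries ℚ := PowerSeries.mk fun n => (((2 * n).choose n : ℕ) : ℚ) with hE
  have hD2 : (1 - 2 * PowerSeries.X * Cs) ^ 2 = 1 - 4 * PowerSeries.X := by
    linear_combination (4 * PowerSeries.X) * catalan_sq
  have hED : E * (1 - 4 * PowerSeries.X) = 1 - 2 * PowerSeries.X * Cs := by
    have h4 : (4 : PowerSeries ℚ) * PowerSeries.X * E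
        = PowerSeries.X * ((PowerSeries.C (R := ℚ) 4) * E) := by
      simp [PowerSeries.C_eq_algebraMap, map_ofNat]; ring
    have h2 : (2 : PowerSeries ℚ) * PowerSeries.X * Cs
        = PowerSeries.X * ((PowerSeries.C (R := ℚ) 2) * Cs) := by
      simp [PowerSeries.C_eq_algebraMap, map_ofNat]; ring
    have : E - 4 * PowerSeries.X * E = 1 - 2 * PowerSeries.X * Cs := by
      rw [h4, h2]
      ext n
      cases n with
      | zero => simp [hE, hCs]
      | succ n =>
        simp only [map_sub, PowerSeries.coeff_succ_X_mul, PowerSeries.coeff_C_mul,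
          PowerSeries.coeff_mk, PowerSeries.coeff_one, Nat.succ_ne_zero, if_false,
          hE, hCs]
        have := key_nat n
        have : ((2 * (n + 1)).choose (n + 1) : ℚ) + 2 * catalan n
            = 4 * ((2 * n).choose n) := by exact_mod_cast congrArg (Nat.cast : ℕ → ℚ) this
        linarith
    linear_combination this
  have hne : (1 - 2 * PowerSeries.X * Cs) ≠ 0 := by
    intro h
    have := congrArg (PowerSeries.constantCoeff (R := ℚ)) h
    simp [hCs] at this
  apply mul_right_cancel₀ hne
  calc E * (1 - 2 * PowerSeries.X * Cs) * (1 - 2 * PowerSeries.X * Cs)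
      = E * (1 - 2 * PowerSeries.X * Cs) ^ 2 := by ring
    _ = E * (1 - 4 * PowerSeries.X) := by rw [hD2]
    _ = 1 - 2 * PowerSeries.X * Cs := hED
    _ = 1 * (1 - 2 * PowerSeries.X * Cs) := (one_mul _).symm
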